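/- The graph Γ* is indivisible but not symmetrically indivisible. -/

import Mathlib

def IsSymmetricGraphEmb {α β : Type*} {G : SimpleGraph α} {H : SimpleGraph β}
    (e : G ↪g H) : Prop :=
  ∀ g : G ≃g G, ∃ g' : H ≃g H, ∀ x, g' (e x) = e (g x)

def IndivGraph {α : Type*} (G : SimpleGraph α) : Prop :=
  ∀ c : α → Bool, ∃ e : G ↪g G, ∀ x y, c (e x) = c (e y)

def SymIndivGraph {α : Type*} (G : SimpleGraph α) : Prop :=
  ∀ c : α → Bool, ∃ e : G ↪g G, IsSymmetricGraphEmb e ∧ ∀ x y, c (e x) = c (e y)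

def HasExtProp {α : Type*} (G : SimpleGraph α) : Prop :=
  ∀ A B : Finset α, Disjoint A B →
    ∃ v, v ∉ A ∧ v ∉ B ∧ (∀ a ∈ A, G.Adj v a) ∧ ∀ b ∈ B, ¬ G.Adj v b

/-- The graph `Γ*`: to the graph `Γ` with enumeration `g` we attach, for each `n`,
an `n`-element clique `K_n` all of whose vertices are joined to `g n`. -/
def GammaStar {V : Type*} (Γ : SimpleGraph V) (g : ℕ → V) :
    SimpleGraph (V ⊕ (Σ n : ℕ, Fin n)) where
  Adj x y :=
    match x, y with
    | Sum.inl u, Sum.inl v => Γ.Adj u v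
    | Sum.inr p, Sum.inr q => p.1 = q.1 ∧ p ≠ q
    | Sum.inl v, Sum.inr p => v = g p.1
    | Sum.inr p, Sum.inl v => v = g p.1
  symm := by
    refine ⟨?_⟩
    rintro (u | p) (v | q) h
    · exact Γ.adj_symm h
    · exact h
    · exact h
    · exact ⟨h.1.symm, h.2.symm⟩
  loopless := by
    refine ⟨?_⟩
    rintro (u | p) h
    · exact Γ.irrefl h
    · exact h.2 rfl


open Sum

section Aux

variable {V : Type*} {Γ : SimpleGraph V} {g : ℕ → V}

lemma ext_nbhd_infinite (hΓ : HasExtProp Γ) (v : V) : {w | Γ.Adj v w}.Infinite := by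
  classical
  intro hfin
  obtain ⟨x, hxA, hxB, hadj, -⟩ := hΓ {v} hfin.toFinset
    (by
      rw [Finset.disjoint_singleton_left, Set.Finite.mem_toFinset]
      exact fun h => Γ.irrefl h)
  exact hxB (hfin.mem_toFinset.mpr (Γ.adj_symm (hadj v (Finset.mem_singleton_self v))))

lemma nbhd_inr_finite (Γ : SimpleGraph V) (g : ℕ → V) (p : Σ n : ℕ, Fin n) :
    ((GammaStar Γ g).neighborSet (inr p)).Finite := by
  apply Set.Finite.subset
    ((Set.finite_range (fun j : Fin p.1 => (inr ⟨p.1, j⟩ : V ⊕ Σ n : ℕ, Fin n))).insert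
      (inl (g p.1)))
  rintro (u | q) hy
  · have : u = g p.1 := hy
    exact Set.mem_insert_iff.mpr (Or.inl (by rw [this]))
  · have h1 : p.1 = q.1 := hy.1
    obtain ⟨m, j⟩ := q
    subst h1
    exact Set.mem_insert_iff.mpr (Or.inr ⟨j, rfl⟩)

lemma emb_inl_ne_inr (hΓ : HasExtProp Γ) (e : GammaStar Γ g ↪g GammaStar Γ g)
    (v : V) (p : Σ n : ℕ, Fin n) : e (inl v) ≠ inr p := by
  intro h
  have hinj : Function.Injective (fun w : V => e (inl w)) :=
    fun a b hab => inl_injective (e.injective hab)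
  have hsub : (fun w : V => e (inl w)) '' {w | Γ.Adj v w} ⊆
      (GammaStar Γ g).neighborSet (e (inl v)) := by
    rintro _ ⟨w, hw, rfl⟩
    exact e.map_rel_iff.mpr (hw : (GammaStar Γ g).Adj (inl v) (inl w))
  have hinf : ((GammaStar Γ g).neighborSet (e (inl v))).Infinite :=
    (((ext_nbhd_infinite hΓ v).image hinj.injOn)).mono hsub
  rw [h] at hinf
  exact hinf (nbhd_inr_finite Γ g p)

end Aux

section Aux2

variable {V : Type*} {Γ : SimpleGraph V} {g : ℕ → V}

lemma auto_fixes_inl (hΓ : HasExtProp Γ) (hg : Function.Bijective g)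
    (f : GammaStar Γ g ≃g GammaStar Γ g) (v : V) : f (inl v) = inl v := by
  classical
  have hinl : ∀ u : V, ∃ u', f (inl u) = inl u' := by
    intro u
    cases h : f (inl u) with
    | inl u' => exact ⟨u', rfl⟩
    | inr p => exact absurd h (emb_inl_ne_inr hΓ f.toEmbedding u p)
  have hinr : ∀ (f' : GammaStar Γ g ≃g GammaStar Γ g) (p : Σ n : ℕ, Fin n),
      ∃ q, f' (inr p) = inr q := by
    intro f' p
    cases h : f' (inr p) with
    | inl u =>
      exfalso
      have h2 : f'.symm (inl u) = inr p := by
        rw [← h, RelIso.symm_apply_apply]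
      exact emb_inl_ne_inr hΓ f'.symm.toEmbedding u p h2
    | inr q => exact ⟨q, rfl⟩
  set M : (Σ n : ℕ, Fin n) → (Σ n : ℕ, Fin n) := fun p => (hinr f p).choose with hMdef
  have hM : ∀ p, f (inr p) = inr (M p) := fun p => (hinr f p).choose_spec
  set M' : (Σ n : ℕ, Fin n) → (Σ n : ℕ, Fin n) := fun p => (hinr f.symm p).choose with hM'def
  have hM' : ∀ p, f.symm (inr p) = inr (M' p) := fun p => (hinr f.symm p).choose_spec
  have hMM' : ∀ p, M' (M p) = p := by
    intro p
    have : f.symm (f (inr p)) = inr p := RelIso.symm_apply_apply f _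
    rw [hM, hM'] at this
    exact inr_injective this
  have hfc : ∀ (f' : GammaStar Γ g ≃g GammaStar Γ g)
      (N : (Σ n : ℕ, Fin n) → (Σ n : ℕ, Fin n)) (_ : ∀ p, f' (inr p) = inr (N p))
      (p p' : Σ n : ℕ, Fin n), p.1 = p'.1 → (N p).1 = (N p').1 := by
    intro f' N hN p p' h
    by_cases hpp : p = p'
    · rw [hpp]
    · have hadj : (GammaStar Γ g).Adj (inr p) (inr p') := ⟨h, hpp⟩
      have := f'.map_adj_iff.mpr hadj
      rw [hN, hN] at this
      exact this.1
  have hle : ∀ (f' : GammaStar Γ g ≃g GammaStar Γ g)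
      (N : (Σ n : ℕ, Fin n) → (Σ n : ℕ, Fin n)) (_ : ∀ p, f' (inr p) = inr (N p))
      (p : Σ n : ℕ, Fin n), p.1 ≤ (N p).1 := by
    intro f' N hN p
    obtain ⟨n, i⟩ := p
    have hcast : ∀ j : Fin n, ((N ⟨n, j⟩).2 : ℕ) < (N ⟨n, i⟩).1 := by
      intro j
      rw [← hfc f' N hN ⟨n, j⟩ ⟨n, i⟩ rfl]
      exact (N ⟨n, j⟩).2.isLt
    have hinj : Function.Injective (fun j : Fin n =>
        (⟨((N ⟨n, j⟩).2 : ℕ), hcast j⟩ : Fin (N ⟨n, i⟩).1)) := by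
      intro j j' hjj'
      have h2 : ((N ⟨n, j⟩).2 : ℕ) = ((N ⟨n, j'⟩).2 : ℕ) := by
        simpa using hjj'
      have h1 : (N ⟨n, j⟩).1 = (N ⟨n, j'⟩).1 := hfc f' N hN _ _ rfl
      have hN2 : N ⟨n, j⟩ = N ⟨n, j'⟩ := Sigma.ext h1 ((Fin.heq_ext_iff h1).mpr h2)
      have : f' (inr ⟨n, j⟩) = f' (inr ⟨n, j'⟩) := by rw [hN, hN, hN2]
      have := inr_injective (f'.injective this)
      simpa using this
    simpa using Fintype.card_le_of_injective _ hinj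
  have hfirst : ∀ p, (M p).1 = p.1 := by
    intro p
    have h1 := hle f M hM p
    have h2 := hle f.symm M' hM' (M p)
    rw [hMM'] at h2
    omega
  have hfixg : ∀ n : ℕ, 0 < n → f (inl (g n)) = inl (g n) := by
    intro n hn
    obtain ⟨u, hu⟩ := hinl (g n)
    set p : Σ k : ℕ, Fin k := ⟨n, ⟨0, hn⟩⟩ with hp
    have hadj : (GammaStar Γ g).Adj (inl (g n)) (inr p) := rfl
    have h2 := f.map_adj_iff.mpr hadj
    rw [hu, hM] at h2
    have h3 : u = g (M p).1 := h2
    rw [hfirst] at h3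
    rw [hu, h3]
  obtain ⟨n, rfl⟩ := hg.2 v
  rcases Nat.eq_zero_or_pos n with hn | hn
  · subst hn
    obtain ⟨u, hu⟩ := hinl (g 0)
    obtain ⟨k, rfl⟩ := hg.2 u
    rcases Nat.eq_zero_or_pos k with hk | hk
    · subst hk; exact hu
    · exfalso
      have h1 : f (inl (g k)) = inl (g k) := hfixg k hk
      have h2 : f (inl (g 0)) = f (inl (g k)) := by rw [hu, h1]
      have := inl_injective (f.injective h2)
      have := hg.1 this; omega
  · exact hfixg n hn

end Aux2

section Aux3

lemma swap_iso_exists {α : Type*} (G : SimpleGraph α) (a b : α) (hab : G.Adj a b)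
    (hsame : ∀ z, z ≠ a → z ≠ b → (G.Adj a z ↔ G.Adj b z)) :
    ∃ φ : G ≃g G, φ a = b ∧ ∀ z, z ≠ a → z ≠ b → φ z = z := by
  classical
  have key : ∀ x y, G.Adj x y → G.Adj (Equiv.swap a b x) (Equiv.swap a b y) := by
    intro x y hxy
    by_cases hxa : x = a
    · rw [hxa] at hxy ⊢
      rw [Equiv.swap_apply_left]
      by_cases hya : y = a
      · rw [hya] at hxy; exact (G.irrefl hxy).elim
      by_cases hyb : y = b
      · rw [hyb, Equiv.swap_apply_right]; exact hab.symm
      · rw [Equiv.swap_apply_of_ne_of_ne hya hyb]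
        exact (hsame y hya hyb).mp hxy
    by_cases hxb : x = b
    · rw [hxb] at hxy ⊢
      rw [Equiv.swap_apply_right]
      by_cases hya : y = a
      · rw [hya, Equiv.swap_apply_left]; exact hab
      by_cases hyb : y = b
      · rw [hyb] at hxy; exact (G.irrefl hxy).elim
      · rw [Equiv.swap_apply_of_ne_of_ne hya hyb]
        exact (hsame y hya hyb).mpr hxy
    · rw [Equiv.swap_apply_of_ne_of_ne hxa hxb]
      by_cases hya : y = a
      · rw [hya] at hxy ⊢
        rw [Equiv.swap_apply_left]
        exact ((hsame x hxa hxb).mp hxy.symm).symm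
      by_cases hyb : y = b
      · rw [hyb] at hxy ⊢
        rw [Equiv.swap_apply_right]
        exact ((hsame x hxa hxb).mpr hxy.symm).symm
      · rw [Equiv.swap_apply_of_ne_of_ne hya hyb]
        exact hxy
  refine ⟨⟨Equiv.swap a b, ?_⟩, Equiv.swap_apply_left a b, fun z h1 h2 =>
    Equiv.swap_apply_of_ne_of_ne h1 h2⟩
  intro x y
  constructor
  · intro h
    have := key _ _ h
    simpa [Equiv.swap_apply_self] using this
  · exact key x y

def RelExt {V : Type*} (Γ : SimpleGraph V) (S : Set V) : Prop :=
  ∀ A B : Finset V, ↑A ⊆ S → ↑B ⊆ S → Disjoint A B →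
    ∃ v ∈ S, v ∉ A ∧ v ∉ B ∧ (∀ a ∈ A, Γ.Adj v a) ∧ ∀ b ∈ B, ¬ Γ.Adj v b

lemma exists_mono_relExt {V : Type*} {Γ : SimpleGraph V} (hΓ : HasExtProp Γ) (c : V → Bool) :
    ∃ (S : Set V) (b : Bool), (∀ v ∈ S, c v = b) ∧ RelExt Γ S := by
  classical
  by_cases hP : ∀ A B : Finset V, Disjoint A B → ∃ v, v ∉ A ∧ v ∉ B ∧
      (∀ a ∈ A, Γ.Adj v a) ∧ (∀ b ∈ B, ¬ Γ.Adj v b) ∧ c v = true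
  · refine ⟨{v | c v = true}, true, fun v hv => hv, ?_⟩
    intro A B _ _ hd
    obtain ⟨v, h1, h2, h3, h4, h5⟩ := hP A B hd
    exact ⟨v, h5, h1, h2, h3, h4⟩
  · push_neg at hP
    obtain ⟨A₀, B₀, hd₀, hP⟩ := hP
    refine ⟨{v | v ∉ A₀ ∧ v ∉ B₀ ∧ (∀ a ∈ A₀, Γ.Adj v a) ∧ ∀ b ∈ B₀, ¬ Γ.Adj v b},
      false, ?_, ?_⟩
    · intro v hv
      have := hP v hv.1 hv.2.1 hv.2.2.1 hv.2.2.2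
      simpa using this
    · intro A B hA hB hd
      have hdisj : Disjoint (A₀ ∪ A) (B₀ ∪ B) := by
        rw [Finset.disjoint_union_left, Finset.disjoint_union_right,
          Finset.disjoint_union_right]
        refine ⟨⟨hd₀, ?_⟩, ⟨?_, hd⟩⟩
        · rw [Finset.disjoint_right]
          intro x hx
          exact (hB hx).1
        · rw [Finset.disjoint_left]
          intro x hx
          exact (hA hx).2.1
      obtain ⟨v, hv1, hv2, hv3, hv4⟩ := hΓ (A₀ ∪ A) (B₀ ∪ B) hdisj
      rw [Finset.mem_union, not_or] at hv1 hv2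
      refine ⟨v, ⟨hv1.1, hv2.1, fun a ha => hv3 a (Finset.mem_union_left _ ha),
        fun b hb => hv4 b (Finset.mem_union_left _ hb)⟩, hv1.2, hv2.2,
        fun a ha => hv3 a (Finset.mem_union_right _ ha),
        fun b hb => hv4 b (Finset.mem_union_right _ hb)⟩

end Aux3

section Build

open Classical in
noncomputable def buildA {V W : Type*} (H : SimpleGraph W) (q : ℕ → W) (n : ℕ)
    (p : ℕ → V) : Finset V :=
  ((Finset.range n).filter (fun j => H.Adj (q n) (q j))).image p

open Classical in
noncomputable def buildB {V W : Type*} (H : SimpleGraph W) (q : ℕ → W) (n : ℕ)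
    (p : ℕ → V) : Finset V :=
  ((Finset.range n).filter (fun j => ¬ H.Adj (q n) (q j))).image p

open Classical in
noncomputable def pick {V : Type*} {Γ : SimpleGraph V} {S : Set V}
    (hS : RelExt Γ S) (hne : S.Nonempty) (A B : Finset V) : V :=
  if h : ↑A ⊆ S ∧ ↑B ⊆ S ∧ Disjoint A B
  then (hS A B h.1 h.2.1 h.2.2).choose
  else hne.choose

noncomputable def buildStep {V W : Type*} {Γ : SimpleGraph V} {S : Set V}
    (H : SimpleGraph W) (hS : RelExt Γ S) (hne : S.Nonempty) (q : ℕ → W)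
    (n : ℕ) (p : ℕ → V) : V :=
  pick hS hne (buildA H q n p) (buildB H q n p)

noncomputable def buildFun {V W : Type*} {Γ : SimpleGraph V} {S : Set V}
    (H : SimpleGraph W) (hS : RelExt Γ S) (hne : S.Nonempty) (q : ℕ → W) :
    ℕ → ℕ → V
  | 0 => fun _ => hne.choose
  | n+1 => fun j => if j = n then buildStep H hS hne q n (buildFun H hS hne q n)
      else buildFun H hS hne q n j

noncomputable def buildEmbFun {V W : Type*} {Γ : SimpleGraph V} {S : Set V}
    (H : SimpleGraph W) (hS : RelExt Γ S) (hne : S.Nonempty) (q : ℕ → W) (n : ℕ) : V :=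
  buildStep H hS hne q n (buildFun H hS hne q n)

lemma buildStep_congr {V W : Type*} {Γ : SimpleGraph V} {S : Set V}
    (H : SimpleGraph W) (hS : RelExt Γ S) (hne : S.Nonempty) (q : ℕ → W) (n : ℕ)
    {p p' : ℕ → V} (h : ∀ j < n, p j = p' j) :
    buildStep H hS hne q n p = buildStep H hS hne q n p' := by
  classical
  have hA : buildA H q n p = buildA H q n p' := by
    apply Finset.image_congr
    intro j hj
    rw [Finset.mem_coe, Finset.mem_filter, Finset.mem_range] at hj
    exact h j hj.1
  have hB : buildB H q n p = buildB H q n p' := by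
    apply Finset.image_congr
    intro j hj
    rw [Finset.mem_coe, Finset.mem_filter, Finset.mem_range] at hj
    exact h j hj.1
  rw [buildStep, buildStep, hA, hB]

lemma buildFun_eq {V W : Type*} {Γ : SimpleGraph V} {S : Set V}
    (H : SimpleGraph W) (hS : RelExt Γ S) (hne : S.Nonempty) (q : ℕ → W) :
    ∀ n j, j < n → buildFun H hS hne q n j = buildEmbFun H hS hne q j := by
  intro n
  induction n with
  | zero => intro j hj; omega
  | succ n IH =>
    intro j hj
    by_cases hjn : j = n
    · subst hjn
      simp [buildFun, buildEmbFun]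
    · have : j < n := by omega
      simp only [buildFun, if_neg hjn]
      exact IH j this

lemma buildEmbFun_eq {V W : Type*} {Γ : SimpleGraph V} {S : Set V}
    (H : SimpleGraph W) (hS : RelExt Γ S) (hne : S.Nonempty) (q : ℕ → W) (n : ℕ) :
    buildEmbFun H hS hne q n = buildStep H hS hne q n (buildEmbFun H hS hne q) :=
  buildStep_congr H hS hne q n (buildFun_eq H hS hne q n)

lemma build_spec {V W : Type*} {Γ : SimpleGraph V} {S : Set V}
    (H : SimpleGraph W) (hS : RelExt Γ S) (hne : S.Nonempty) (q : ℕ → W) :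
    ∀ n, buildEmbFun H hS hne q n ∈ S ∧ ∀ j < n,
      buildEmbFun H hS hne q n ≠ buildEmbFun H hS hne q j ∧
      (Γ.Adj (buildEmbFun H hS hne q n) (buildEmbFun H hS hne q j) ↔
        H.Adj (q n) (q j)) := by
  intro n
  induction n using Nat.strong_induction_on with
  | _ n IH =>
  classical
  set f : ℕ → V := buildEmbFun H hS hne q with hf
  have hinj : ∀ j < n, ∀ k < n, j ≠ k → f j ≠ f k := by
    intro j hj k hk hjk
    rcases lt_or_gt_of_ne hjk with h | h
    · exact fun he => ((IH k hk).2 j h).1 he.symm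
    · exact ((IH j hj).2 k h).1
  have hA : ↑(buildA H q n f) ⊆ S := by
    intro v hv
    rw [Finset.mem_coe, buildA, Finset.mem_image] at hv
    obtain ⟨j, hj, rfl⟩ := hv
    rw [Finset.mem_filter, Finset.mem_range] at hj
    exact (IH j hj.1).1
  have hB : ↑(buildB H q n f) ⊆ S := by
    intro v hv
    rw [Finset.mem_coe, buildB, Finset.mem_image] at hv
    obtain ⟨j, hj, rfl⟩ := hv
    rw [Finset.mem_filter, Finset.mem_range] at hj
    exact (IH j hj.1).1
  have hd : Disjoint (buildA H q n f) (buildB H q n f) := by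
    rw [Finset.disjoint_left]
    intro v hvA hvB
    rw [buildA, Finset.mem_image] at hvA
    rw [buildB, Finset.mem_image] at hvB
    obtain ⟨j, hj, rfl⟩ := hvA
    obtain ⟨k, hk, hjk⟩ := hvB
    rw [Finset.mem_filter, Finset.mem_range] at hj hk
    by_cases hjk' : k = j
    · subst hjk'; exact hk.2 hj.2
    · exact hinj k hk.1 j hj.1 hjk' hjk
  have hfn : f n = (hS _ _ hA hB hd).choose := by
    have h1 : f n = buildStep H hS hne q n f := buildEmbFun_eq H hS hne q n
    rw [h1, buildStep, pick, dif_pos ⟨hA, hB, hd⟩]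
  obtain ⟨hvS, hvA, hvB, hadj, hnadj⟩ := (hS _ _ hA hB hd).choose_spec
  rw [← hfn] at hvS hvA hvB hadj hnadj
  refine ⟨hvS, fun j hj => ?_⟩
  have hjA : H.Adj (q n) (q j) → f j ∈ buildA H q n f := by
    intro h
    rw [buildA, Finset.mem_image]
    exact ⟨j, Finset.mem_filter.mpr ⟨Finset.mem_range.mpr hj, h⟩, rfl⟩
  have hjB : ¬ H.Adj (q n) (q j) → f j ∈ buildB H q n f := by
    intro h
    rw [buildB, Finset.mem_image]
    exact ⟨j, Finset.mem_filter.mpr ⟨Finset.mem_range.mpr hj, h⟩, rfl⟩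
  constructor
  · intro he
    by_cases h : H.Adj (q n) (q j)
    · exact hvA (he ▸ hjA h)
    · exact hvB (he ▸ hjB h)
  · constructor
    · intro h
      by_contra h'
      exact hnadj _ (hjB h') h
    · intro h
      exact hadj _ (hjA h)

end Build


theorem gammaStar_indivisible_not_symIndivisible {V : Type*} [Countable V]
    (Γ : SimpleGraph V) (hΓ : HasExtProp Γ) (g : ℕ → V) (hg : Function.Bijective g) :
    IndivGraph (GammaStar Γ g) ∧ ¬ SymIndivGraph (GammaStar Γ g) := by
  constructor
  · intro c
    haveI : Infinite V := Infinite.of_injective g hg.1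
    obtain ⟨q⟩ : Nonempty (ℕ ≃ (V ⊕ Σ n : ℕ, Fin n)) := nonempty_equiv_of_countable
    obtain ⟨S, b, hmonoS, hS⟩ := exists_mono_relExt hΓ (fun v => c (inl v))
    have hne : S.Nonempty := by
      obtain ⟨v, hv, -⟩ := hS ∅ ∅ (by simp) (by simp) (by simp)
      exact ⟨v, hv⟩
    set f := buildEmbFun (GammaStar Γ g) hS hne q with hfdef
    have spec := build_spec (GammaStar Γ g) hS hne q
    have finj : Function.Injective f := by
      intro i j hij
      by_contra hne'
      rcases lt_or_gt_of_ne hne' with h | h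
      · exact ((spec j).2 i h).1 hij.symm
      · exact ((spec i).2 j h).1 hij
    refine ⟨⟨⟨fun x => Sum.inl (f (q.symm x)), ?_⟩, ?_⟩, ?_⟩
    · intro x y h
      simp only at h
      exact q.symm.injective (finj (inl_injective h))
    · intro x y
      show (GammaStar Γ g).Adj (inl (f (q.symm x))) (inl (f (q.symm y))) ↔
        (GammaStar Γ g).Adj x y
      have hix : q (q.symm x) = x := q.apply_symm_apply x
      have hiy : q (q.symm y) = y := q.apply_symm_apply y
      rcases lt_trichotomy (q.symm x) (q.symm y) with h | h | h
      · have h2 := ((spec (q.symm y)).2 _ h).2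
        rw [hiy, hix] at h2
        rw [show ((GammaStar Γ g).Adj (inl (f (q.symm x))) (inl (f (q.symm y))) ↔
          Γ.Adj (f (q.symm x)) (f (q.symm y))) from Iff.rfl,
          Γ.adj_comm, (GammaStar Γ g).adj_comm]
        exact h2
      · have hxy : x = y := by rw [← hix, ← hiy, h]
        subst hxy
        rw [h]
        exact ⟨fun hh => ((GammaStar Γ g).irrefl hh).elim,
          fun hh => ((GammaStar Γ g).irrefl hh).elim⟩
      · have h2 := ((spec (q.symm x)).2 _ h).2
        rw [hix, hiy] at h2
        exact h2
    · intro x y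
      show c (inl (f (q.symm x))) = c (inl (f (q.symm y)))
      have e1 := hmonoS _ (spec (q.symm x)).1
      have e2 := hmonoS _ (spec (q.symm y)).1
      rw [e1, e2]
  · intro hsym
    obtain ⟨e, hsymm, hmono⟩ := hsym (Sum.elim (fun _ => false) (fun _ => true))
    obtain ⟨u, hu⟩ : ∃ u, e (inl (g 0)) = inl u := by
      cases h : e (inl (g 0)) with
      | inl u => exact ⟨u, rfl⟩
      | inr p => exact absurd h (emb_inl_ne_inr hΓ e (g 0) p)
    have hc := hmono (inr ⟨2, (0 : Fin 2)⟩) (inl (g 0))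
    rw [hu] at hc
    obtain ⟨w, hw⟩ : ∃ w, e (inr ⟨2, (0 : Fin 2)⟩) = inl w := by
      cases h : e (inr ⟨2, (0 : Fin 2)⟩) with
      | inl w => exact ⟨w, rfl⟩
      | inr p => rw [h] at hc; simp at hc
    have hab : (GammaStar Γ g).Adj (inr ⟨2, (0 : Fin 2)⟩) (inr ⟨2, (1 : Fin 2)⟩) :=
      ⟨rfl, by decide⟩
    have hsame : ∀ z, z ≠ inr ⟨2, (0 : Fin 2)⟩ → z ≠ inr ⟨2, (1 : Fin 2)⟩ →
        ((GammaStar Γ g).Adj (inr ⟨2, (0 : Fin 2)⟩) z ↔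
          (GammaStar Γ g).Adj (inr ⟨2, (1 : Fin 2)⟩) z) := by
      rintro (v | p) h0 h1
      · exact Iff.rfl
      · constructor
        · rintro ⟨hq1, -⟩
          exact ⟨hq1, fun hh => h1 (by rw [← hh])⟩
        · rintro ⟨hq1, -⟩
          exact ⟨hq1, fun hh => h0 (by rw [← hh])⟩
    obtain ⟨φ, hφab, -⟩ := swap_iso_exists (GammaStar Γ g) _ _ hab hsame
    obtain ⟨ψ, hψ⟩ := hsymm φ
    have h1 := hψ (inr ⟨2, (0 : Fin 2)⟩)
    rw [hφab, hw, auto_fixes_inl hΓ hg ψ w] at h1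
    have h2 := e.injective (hw.trans h1)
    have h3 := inr_injective h2
    exact absurd h3 (by decide)
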